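/- Let F be the cumulative distribution function of a probability distribution supported on a finite set {a_1,…,a_m} ⊂ ℝ, let Z_1,…,Z_n be i.i.d. with CDF F, and let F̂ be their empirical CDF. Then for every q ∈ (0,1], E[ F(F̂⁻¹(q)) ] ≥ ⌈nq⌉ / (n+1). -/

import Mathlib

open MeasureTheory ProbabilityTheory
open scoped ENNReal

/-- The empirical quantile `F̂⁻¹(q) = inf{z : F̂(z) ≥ q}`, where `F̂` is the empirical
CDF of the tuple `x`. -/
noncomputable def empQuantile {n : ℕ} (x : Fin n → ℝ) (q : ℝ) : ℝ :=
  sInf {z : ℝ | q ≤ (Set.ncard {i : Fin n | x i ≤ z} : ℝ) / n}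


/-- count of coordinates ≤ t -/
noncomputable def cnt {m : ℕ} (x : Fin m → ℝ) (t : ℝ) : ℕ :=
  (Finset.univ.filter fun i => x i ≤ t).card

lemma cnt_mono {m : ℕ} (x : Fin m → ℝ) {t t' : ℝ} (h : t ≤ t') : cnt x t ≤ cnt x t' :=
  Finset.card_le_card (fun i hi => by
    simp only [Finset.mem_filter] at *; exact ⟨hi.1, hi.2.trans h⟩)

lemma exists_threshold {m k : ℕ} (hk1 : 1 ≤ k) (hkm : k ≤ m) (x : Fin m → ℝ) :
    ∃ z : ℝ, ∀ t : ℝ, k ≤ cnt x t ↔ z ≤ t := by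
  have hm : 0 < m := hk1.trans hkm
  have : Nonempty (Fin m) := ⟨⟨0, hm⟩⟩
  have himg : (Finset.univ.image x).Nonempty := ⟨x ⟨0, hm⟩, Finset.mem_image_of_mem x (Finset.mem_univ _)⟩
  set C : Finset ℝ := (Finset.univ.image x).filter (fun t => k ≤ cnt x t) with hC
  have hCne : C.Nonempty := by
    refine ⟨(Finset.univ.image x).max' himg, Finset.mem_filter.2 ⟨(Finset.univ.image x).max'_mem himg, ?_⟩⟩
    have : cnt x ((Finset.univ.image x).max' himg) = m := by
      unfold cnt
      rw [Finset.filter_true_of_mem, Finset.card_univ, Fintype.card_fin]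
      intro i _
      exact Finset.le_max' _ _ (Finset.mem_image_of_mem x (Finset.mem_univ i))
    omega
  refine ⟨C.min' hCne, fun t => ⟨fun h => ?_, fun h => ?_⟩⟩
  · -- k ≤ cnt x t → min' ≤ t
    set S : Finset (Fin m) := Finset.univ.filter (fun i => x i ≤ t) with hS
    have hSne : S.Nonempty := Finset.card_pos.1 (lt_of_lt_of_le hk1 h)
    have hSimg : (S.image x).Nonempty := hSne.image x
    set t' : ℝ := (S.image x).max' hSimg with ht'
    obtain ⟨i₀, hi₀S, hi₀⟩ := Finset.mem_image.1 ((S.image x).max'_mem hSimg)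
    have ht't : t' ≤ t := by
      rw [ht', ← hi₀]; exact (Finset.mem_filter.1 hi₀S).2
    have hcnt' : k ≤ cnt x t' := by
      refine le_trans h (Finset.card_le_card ?_)
      intro i hi
      simp only [Finset.mem_filter, Finset.mem_univ, true_and] at hi ⊢
      exact Finset.le_max' _ _ (Finset.mem_image_of_mem x (Finset.mem_filter.2 ⟨Finset.mem_univ i, hi⟩))
    have ht'C : t' ∈ C := Finset.mem_filter.2
      ⟨Finset.mem_image.2 ⟨i₀, Finset.mem_univ i₀, hi₀⟩, hcnt'⟩
    exact le_trans (C.min'_le _ ht'C) ht't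
  · -- min' ≤ t → k ≤ cnt x t
    have := (Finset.mem_filter.1 (C.min'_mem hCne)).2
    exact le_trans this (cnt_mono x h)

lemma empQuantile_le_iff {n : ℕ} (hn : 1 ≤ n) (x : Fin n → ℝ) {q : ℝ}
    (hq : q ∈ Set.Ioc (0 : ℝ) 1) (t : ℝ) :
    empQuantile x q ≤ t ↔ ⌈(n : ℝ) * q⌉₊ ≤ cnt x t := by
  obtain ⟨hq0, hq1⟩ := hq
  have hk1 : 1 ≤ ⌈(n : ℝ) * q⌉₊ := by
    rw [Nat.one_le_iff_ne_zero, ← Nat.pos_iff_ne_zero, Nat.ceil_pos]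
    positivity
  have hkn : ⌈(n : ℝ) * q⌉₊ ≤ n := by
    rw [Nat.ceil_le]
    have : (1:ℝ) ≤ (n:ℝ) := by exact_mod_cast hn
    nlinarith
  obtain ⟨z, hz⟩ := exists_threshold hk1 hkn x
  have hnpos : (0 : ℝ) < n := by exact_mod_cast hn
  have hset : {z' : ℝ | q ≤ (Set.ncard {i : Fin n | x i ≤ z'} : ℝ) / n} = Set.Ici z := by
    ext t'
    simp only [Set.mem_setOf_eq, Set.mem_Ici]
    rw [le_div_iff₀ hnpos, ← hz t']
    have hcard : Set.ncard {i : Fin n | x i ≤ t'} = cnt x t' := by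
      rw [Set.ncard_eq_toFinset_card']
      congr 1
      ext i
      simp [cnt]
    rw [hcard]
    rw [mul_comm q _]
    constructor
    · intro h
      exact_mod_cast Nat.ceil_le.2 h
    · intro h
      exact le_trans (Nat.le_ceil _) (by exact_mod_cast h)
  rw [empQuantile, hset, csInf_Ici, ← hz t]

lemma measurable_empQuantile {n : ℕ} (hn : 1 ≤ n) {q : ℝ} (hq : q ∈ Set.Ioc (0 : ℝ) 1) :
    Measurable (fun x : Fin n → ℝ => empQuantile x q) := by
  apply measurable_of_Iic
  intro t
  have h1 : (fun x : Fin n → ℝ => empQuantile x q) ⁻¹' Set.Iic t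
      = (fun x : Fin n → ℝ => cnt x t) ⁻¹' Set.Ici ⌈(n : ℝ) * q⌉₊ := by
    ext x
    simp [empQuantile_le_iff hn x hq t]
  rw [h1]
  have hc : Measurable fun x : Fin n → ℝ => cnt x t := by
    unfold cnt
    simp_rw [Finset.card_filter]
    exact Finset.measurable_sum _ (fun i _ =>
      Measurable.ite (measurableSet_le (measurable_pi_apply i) measurable_const)
        measurable_const measurable_const)
  exact hc measurableSet_Ici

/-- Deterministic counting lemma. -/
lemma card_le_count {n : ℕ} (hn : 1 ≤ n) {q : ℝ} (hq : q ∈ Set.Ioc (0 : ℝ) 1)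
    (w : Fin (n + 1) → ℝ) :
    ⌈(n : ℝ) * q⌉₊ ≤ (Finset.univ.filter fun j : Fin (n + 1) =>
      w j ≤ empQuantile (fun i => w (j.succAbove i)) q).card := by
  set k := ⌈(n : ℝ) * q⌉₊ with hk
  have hk1 : 1 ≤ k := by
    rw [hk, Nat.one_le_iff_ne_zero, ← Nat.pos_iff_ne_zero, Nat.ceil_pos]
    have h0 : (0:ℝ) < n := by exact_mod_cast hn
    nlinarith [hq.1]
  have hkn : k ≤ n + 1 := by
    rw [hk, Nat.ceil_le]
    push_cast
    nlinarith [hq.2, (by exact_mod_cast Nat.zero_le n : (0:ℝ) ≤ (n:ℝ))]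
  obtain ⟨z, hz⟩ := exists_threshold hk1 hkn w
  -- all i with w i < z : fewer than k of them
  have hlt : ∀ c : ℝ, c ≤ z → (Finset.univ.filter fun i : Fin (n+1) => w i < c).card < k := by
    intro c hc
    set S : Finset (Fin (n+1)) := Finset.univ.filter (fun i => w i < c) with hS
    rcases S.eq_empty_or_nonempty with hSe | hSne
    · rw [hSe]; simp; omega
    · have hSimg : (S.image w).Nonempty := hSne.image w
      set t₀ : ℝ := (S.image w).max' hSimg with ht₀
      obtain ⟨i₀, hi₀S, hi₀⟩ := Finset.mem_image.1 ((S.image w).max'_mem hSimg)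
      have ht₀c : t₀ < c := by rw [ht₀, ← hi₀]; exact (Finset.mem_filter.1 hi₀S).2
      have hcard : S.card ≤ cnt w t₀ := by
        apply Finset.card_le_card
        intro i hi
        simp only [cnt, Finset.mem_filter, Finset.mem_univ, true_and]
        exact Finset.le_max' _ _ (Finset.mem_image_of_mem w hi)
      have : ¬ (k ≤ cnt w t₀) := by
        rw [hz]
        exact not_le.2 (lt_of_lt_of_le ht₀c hc)
      omega
  -- each j with w j ≤ z belongs to the filter
  have hmem : ∀ j : Fin (n+1), w j ≤ z →
      w j ≤ empQuantile (fun i => w (j.succAbove i)) q := by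
    intro j hj
    set x : Fin n → ℝ := fun i => w (j.succAbove i) with hx
    by_contra hlt'
    push_neg at hlt'  -- empQuantile x q < w j
    have hgg : empQuantile x q ≤ empQuantile x q := le_rfl
    rw [empQuantile_le_iff hn x hq] at hgg
    -- so k ≤ cnt x (empQuantile x q); but each such coordinate is < w j ≤ z
    have hsub : (Finset.univ.filter fun i : Fin n => x i ≤ empQuantile x q).card
        ≤ (Finset.univ.filter fun i : Fin (n+1) => w i < w j).card := by
      apply Finset.card_le_card_of_injOn (fun i => j.succAbove i)
      · intro i hi
        simp only [Finset.mem_coe, Finset.mem_filter, Finset.mem_univ, true_and] at hi ⊢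
        exact lt_of_le_of_lt hi hlt'
      · intro a _ b _ hab
        exact Fin.succAbove_right_injective hab
    have := hlt (w j) hj
    unfold cnt at hgg
    omega
  -- conclude
  have hzz : k ≤ cnt w z := (hz z).2 le_rfl
  refine le_trans hzz (Finset.card_le_card ?_)
  intro j hj
  simp only [cnt, Finset.mem_filter, Finset.mem_univ, true_and] at hj ⊢
  exact hmem j hj

/-- **Lower bound on the expected plug-in CDF value at the empirical quantile** of
i.i.d. finitely supported samples: `E[F(F̂⁻¹(q))] ≥ ⌈nq⌉/(n+1)`. -/
theorem expected_cdf_empQuantile_ge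
    {Ω ι : Type*} [MeasurableSpace Ω] (P : Measure Ω) [IsProbabilityMeasure P]
    [Fintype ι] [Nonempty ι]
    (a : ι → ℝ)
    (n : ℕ) (hn : 1 ≤ n)
    (Z : Fin n → Ω → ℝ) (hmeas : ∀ i, Measurable (Z i))
    (hiid : iIndepFun Z P)
    (hident : ∀ i j, IdentDistrib (Z i) (Z j) P P)
    (hsupp : ∀ i ω, Z i ω ∈ Set.range a)
    (F : ℝ → ℝ) (hF : ∀ z, F z = (P {ω | Z ⟨0, hn⟩ ω ≤ z}).toReal)
    (q : ℝ) (hq : q ∈ Set.Ioc (0 : ℝ) 1) :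
    (⌈(n : ℝ) * q⌉₊ : ℝ) / ((n : ℝ) + 1) ≤
      ∫ ω, F (empQuantile (fun i => Z i ω) q) ∂P := by
  classical
  set k := ⌈(n : ℝ) * q⌉₊ with hk
  set μ : Measure ℝ := P.map (Z ⟨0, hn⟩) with hμ
  have hμprob : IsProbabilityMeasure μ := Measure.isProbabilityMeasure_map (hmeas _).aemeasurable
  set g : (Fin n → ℝ) → ℝ := fun x => empQuantile x q with hg
  have hgmeas : Measurable g := measurable_empQuantile hn hq
  -- F in terms of μ
  have hFμ : ∀ z, F z = (μ (Set.Iic z)).toReal := by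
    intro z
    rw [hF, hμ, Measure.map_apply (hmeas _) measurableSet_Iic]
    rfl
  have hFmeas : Measurable F := by
    have : Monotone F := by
      intro s t hst
      rw [hFμ, hFμ]
      exact ENNReal.toReal_mono (measure_ne_top _ _) (measure_mono (Set.Iic_subset_Iic.2 hst))
    exact this.measurable
  -- joint law
  set V : Ω → (Fin n → ℝ) := fun ω i => Z i ω with hV
  have hVmeas : Measurable V := measurable_pi_iff.2 hmeas
  have hjoint : Measure.pi (fun _ : Fin n => μ) = P.map V := by
    refine Measure.pi_eq fun s hs => ?_
    rw [Measure.map_apply hVmeas (MeasurableSet.univ_pi hs)]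
    have hpre : V ⁻¹' Set.univ.pi s = ⋂ i, Z i ⁻¹' s i := by
      ext ω; simp [hV, Set.mem_pi]
    rw [hpre]
    have := hiid.meas_iInter (s := fun i => Z i ⁻¹' s i) (fun i => ⟨s i, hs i, rfl⟩)
    rw [this]
    refine Finset.prod_congr rfl fun i _ => ?_
    rw [hμ, Measure.map_apply (hmeas _) (hs i),
      ← Measure.map_apply (hmeas i) (hs i), (hident i ⟨0, hn⟩).map_eq,
      Measure.map_apply (hmeas _) (hs i)]
  -- lintegral quantity
  have hμIic_meas : Measurable fun z : ℝ => μ (Set.Iic z) := by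
    have : Monotone fun z : ℝ => μ (Set.Iic z) := fun s t hst =>
      measure_mono (Set.Iic_subset_Iic.2 hst)
    exact this.measurable
  set πn : Measure (Fin n → ℝ) := Measure.pi (fun _ => μ) with hπn
  set c : ℝ≥0∞ := ∫⁻ x, μ (Set.Iic (g x)) ∂πn with hc
  -- rewrite the integral
  have hint : ∫ ω, F (empQuantile (fun i => Z i ω) q) ∂P = c.toReal := by
    have h1 : ∫ y, (F ∘ g) y ∂(Measure.map V P) = ∫ ω, (F ∘ g) (V ω) ∂P :=
      integral_map hVmeas.aemeasurable ((hFmeas.comp hgmeas).aestronglyMeasurable)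
    calc ∫ ω, F (empQuantile (fun i => Z i ω) q) ∂P
        = ∫ ω, (F ∘ g) (V ω) ∂P := rfl
      _ = ∫ y, (F ∘ g) y ∂(Measure.map V P) := h1.symm
      _ = ∫ y, (F ∘ g) y ∂πn := by rw [hjoint]
      _ = ∫ y, (μ (Set.Iic (g y))).toReal ∂πn := by
          refine integral_congr_ae (Filter.Eventually.of_forall fun y => ?_)
          simp only [Function.comp_apply]
          exact hFμ _
      _ = c.toReal :=
          integral_toReal ((hμIic_meas.comp hgmeas).aemeasurable)
            (Filter.Eventually.of_forall fun x => measure_lt_top _ _)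
  rw [hint]
  -- the (n+1)-fold product
  set ν : Measure (Fin (n+1) → ℝ) := Measure.pi (fun _ => μ) with hν
  set B : Set (ℝ × (Fin n → ℝ)) := {p | p.1 ≤ g p.2} with hB
  have hBmeas : MeasurableSet B := measurableSet_le measurable_fst (hgmeas.comp measurable_snd)
  set A : Fin (n+1) → Set (Fin (n+1) → ℝ) :=
    fun j => {w | w j ≤ g (fun i => w (j.succAbove i))} with hA
  have hAmeas : ∀ j, MeasurableSet (A j) := fun j =>
    measurableSet_le (measurable_pi_apply j)
      (hgmeas.comp (measurable_pi_iff.2 fun i => measurable_pi_apply _))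
  have hAj : ∀ j, ν (A j) = (μ.prod πn) B := by
    intro j
    have hpre : A j = (MeasurableEquiv.piFinSuccAbove (fun _ : Fin (n+1) => ℝ) j) ⁻¹' B := by
      ext w
      simp only [hA, hB, Set.mem_preimage, Set.mem_setOf_eq,
        MeasurableEquiv.piFinSuccAbove_apply, Fin.insertNthEquiv, Fin.removeNth,
        Equiv.coe_fn_symm_mk]
      exact Iff.rfl
    rw [hpre]
    exact (measurePreserving_piFinSuccAbove (fun _ : Fin (n+1) => μ) j).measure_preimage_equiv B
  have hprodB : (μ.prod πn) B = c := by
    rw [Measure.prod_apply_symm hBmeas, hc]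
    refine lintegral_congr fun x => ?_
    congr 1
  -- sum of indicators
  have hkey : (k : ℝ≥0∞) ≤ (n + 1) * c := by
    have hconst : (k : ℝ≥0∞) = ∫⁻ _, (k : ℝ≥0∞) ∂ν := by
      rw [lintegral_const, measure_univ, mul_one]
    rw [hconst]
    calc ∫⁻ _, (k : ℝ≥0∞) ∂ν
        ≤ ∫⁻ w, ∑ j : Fin (n+1), (A j).indicator (1 : (Fin (n+1) → ℝ) → ℝ≥0∞) w ∂ν := by
          apply lintegral_mono
          intro w
          show (k : ℝ≥0∞) ≤ ∑ j : Fin (n+1), (A j).indicator (1 : (Fin (n+1) → ℝ) → ℝ≥0∞) w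
          have hcard := card_le_count hn hq w
          have : ∑ j : Fin (n+1), (A j).indicator (1 : (Fin (n+1) → ℝ) → ℝ≥0∞) w
              = ((Finset.univ.filter fun j : Fin (n + 1) =>
                  w j ≤ empQuantile (fun i => w (j.succAbove i)) q).card : ℝ≥0∞) := by
            rw [Finset.card_filter]
            push_cast
            refine Finset.sum_congr rfl fun j _ => ?_
            simp [Set.indicator_apply, hA, hg]
          rw [this]
          exact_mod_cast hcard
      _ = ∑ j : Fin (n+1), ν (A j) := by
          rw [lintegral_finset_sum _ fun j _ => (measurable_one.indicator (hAmeas j))]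
          simp_rw [lintegral_indicator_one (hAmeas _)]
      _ = (n + 1) * c := by
          simp_rw [fun j => (hAj j).trans hprodB]
          simp [Finset.sum_const, Finset.card_univ, mul_comm]
  -- conclude
  have hdiv : (k : ℝ≥0∞) / ((n : ℝ≥0∞) + 1) ≤ c := by
    apply ENNReal.div_le_of_le_mul'
    exact_mod_cast hkey
  have hcne : c ≠ ⊤ := by
    have : c ≤ 1 := by
      rw [hc]
      calc ∫⁻ x, μ (Set.Iic (g x)) ∂πn ≤ ∫⁻ _, 1 ∂πn :=
            lintegral_mono fun x => prob_le_one
        _ = 1 := by rw [lintegral_one, measure_univ]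
    exact ne_top_of_le_ne_top ENNReal.one_ne_top this
  have := ENNReal.toReal_mono hcne hdiv
  rw [ENNReal.toReal_div] at this
  have h1 : ((n : ℝ≥0∞) + 1).toReal = (n:ℝ) + 1 := by
    rw [ENNReal.toReal_add (by simp) (by simp)]; simp
  rw [h1] at this
  simpa using this
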